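/- If a graph G admits a path-decomposition (D_y : y ∈ V(P)) of width at most k, and X ⊆ V(P), and Y ⊆ V(P) \ X satisfies D_x ∩ D_y = ∅ for all x ∈ X, y ∈ Y and D_{y₁} ∩ D_{y₂} = ∅ for distinct y₁, y₂ ∈ Y, and Y is maximal with this property, then setting Z := ⋃{D_z : z ∈ X ∪ Y}, the sequence (D_a \ Z : a ∈ V(P)) is a path-decomposition of G − Z of width at most k − 1. -/
import Mathlib


/-- `B` is a path-partition of `G` indexed by `Fin m`: the bags partition the
vertex set and every edge joins vertices in bags with indices differing by at most 1. -/
def IsPathPartition {V : Type*} (G : SimpleGraph V) {m : ℕ} (B : Fin m → Finset V) : Prop :=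
  (∀ v : V, ∃! i : Fin m, v ∈ B i) ∧
  ∀ ⦃v w : V⦄, G.Adj v w → ∀ ⦃i j : Fin m⦄, v ∈ B i → w ∈ B j →
    (i.val : ℤ) - j.val ≤ 1 ∧ (j.val : ℤ) - i.val ≤ 1

/-- `B` is a path-decomposition of the part of `G` induced on `U`:
bags lie in `U`, every edge of `G` inside `U` is in a common bag, every vertex
of `U` is in some bag, and the bags containing a given vertex are consecutive. -/
def IsPathDecompOn {V : Type*} (G : SimpleGraph V) (U : Set V) {n : ℕ}
    (B : Fin n → Finset V) : Prop :=
  (∀ i, ↑(B i) ⊆ U) ∧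
  (∀ ⦃v w : V⦄, G.Adj v w → v ∈ U → w ∈ U → ∃ i, v ∈ B i ∧ w ∈ B i) ∧
  (∀ v ∈ U, ∃ i, v ∈ B i) ∧
  (∀ (v : V) (i j l : Fin n), i ≤ j → j ≤ l → v ∈ B i → v ∈ B l → v ∈ B j)

/-- The part of `G` induced on `U` has pathwidth at most `k`. -/
def PWleOn {V : Type*} (G : SimpleGraph V) (U : Set V) (k : ℕ) : Prop :=
  ∃ (n : ℕ) (B : Fin n → Finset V), 0 < n ∧ IsPathDecompOn G U B ∧
    ∀ i, (B i).card ≤ k + 1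

/-- `G` has pathwidth at most `k`. -/
def PWle {V : Type*} (G : SimpleGraph V) (k : ℕ) : Prop :=
  PWleOn G Set.univ k

/-- `B` is a `T`-partition of `G`: the bags (indexed by the vertices of `T`)
partition `V(G)` and every edge of `G` joins vertices in the same bag or in
bags indexed by adjacent nodes of `T`. -/
def IsTreePartition {ι V : Type*} (T : SimpleGraph ι) (G : SimpleGraph V)
    (B : ι → Finset V) : Prop :=
  (∀ v : V, ∃! x : ι, v ∈ B x) ∧
  ∀ ⦃v w : V⦄, G.Adj v w → ∀ ⦃x y : ι⦄, v ∈ B x → w ∈ B y → x = y ∨ T.Adj x y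

/-- `C` is a tree-decomposition of `G` indexed by the tree `T`: every edge lies
in some bag and for each vertex the nodes whose bags contain it induce a
non-empty connected subgraph of `T`. -/
def IsTreeDecomp {ι V : Type*} (T : SimpleGraph ι) (G : SimpleGraph V)
    (C : ι → Finset V) : Prop :=
  (∀ ⦃v w : V⦄, G.Adj v w → ∃ x, v ∈ C x ∧ w ∈ C x) ∧
  (∀ v : V, ∃ x, v ∈ C x) ∧
  (∀ v : V, (T.induce {x : ι | v ∈ C x}).Connected)

/-- `G` has maximum degree at most `d`. -/
def MaxDegLE {V : Type*} (G : SimpleGraph V) (d : ℕ) : Prop :=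
  ∀ v : V, (G.neighborSet v).ncard ≤ d

/-- The graph obtained from `G` by deleting the vertices in `S`. -/
def delv {V : Type*} (G : SimpleGraph V) (S : Set V) : SimpleGraph V :=
  SimpleGraph.fromRel (fun a b => G.Adj a b ∧ a ∉ S ∧ b ∉ S)

/-- Suppose `G` has a path-decomposition `(D_y : y ∈ V(P))` of
width at most `k`, `X ⊆ V(P)`, and `Y ⊆ V(P) \ X` satisfies `D_x ∩ D_y = ∅` for
all `x ∈ X`, `y ∈ Y`, and `D_{y₁} ∩ D_{y₂} = ∅` for distinct `y₁, y₂ ∈ Y`, and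
`Y` is maximal with this property (every `a ∉ X ∪ Y` meets some `D_z`,
`z ∈ X ∪ Y`). Then with `Z := ⋃ {D_z : z ∈ X ∪ Y}`, the sequence
`(D_a \ Z : a ∈ V(P))` is a path-decomposition of `G − Z` of width at most
`k − 1`. -/
theorem stmt18 {V : Type*} [DecidableEq V] (G : SimpleGraph V)
    (k n : ℕ) (D : Fin n → Finset V)
    (hpd : IsPathDecompOn G Set.univ D) (hwidth : ∀ i, (D i).card ≤ k + 1)
    (X Y : Finset (Fin n)) (hXY : Disjoint X Y)
    (hsep : ∀ x ∈ X, ∀ y ∈ Y, D x ∩ D y = ∅)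
    (hpair : ∀ y₁ ∈ Y, ∀ y₂ ∈ Y, y₁ ≠ y₂ → D y₁ ∩ D y₂ = ∅)
    (hmax : ∀ a : Fin n, a ∉ X ∪ Y → ∃ z ∈ X ∪ Y, D a ∩ D z ≠ ∅)
    (Z : Finset V) (hZ : Z = (X ∪ Y).biUnion D) :
    IsPathDecompOn G {v : V | v ∉ Z} (fun a => D a \ Z) ∧
    ∀ a, (D a \ Z).card ≤ k := by
  obtain ⟨-, hedge, hcover, hconsec⟩ := hpd
  refine ⟨⟨fun i v hv => ?_, fun v w hadj hv hw => ?_, fun v hv => ?_,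
      fun v i j l hij hjl hvi hvl => ?_⟩, fun a => ?_⟩
  · simp only [Finset.mem_coe, Finset.mem_sdiff] at hv
    exact hv.2
  · obtain ⟨i, hvi, hwi⟩ := hedge hadj trivial trivial
    exact ⟨i, Finset.mem_sdiff.2 ⟨hvi, hv⟩, Finset.mem_sdiff.2 ⟨hwi, hw⟩⟩
  · obtain ⟨i, hi⟩ := hcover v trivial
    exact ⟨i, Finset.mem_sdiff.2 ⟨hi, hv⟩⟩
  · have := hconsec v i j l hij hjl (Finset.mem_sdiff.1 hvi).1 (Finset.mem_sdiff.1 hvl).1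
    exact Finset.mem_sdiff.2 ⟨this, (Finset.mem_sdiff.1 hvi).2⟩
  · by_cases ha : a ∈ X ∪ Y
    · have : D a \ Z = ∅ := by
        apply Finset.sdiff_eq_empty_iff_subset.2
        rw [hZ]
        exact fun v hv => Finset.mem_biUnion.2 ⟨a, ha, hv⟩
      simp [this]
    · obtain ⟨z, hz, hne⟩ := hmax a ha
      obtain ⟨v, hv⟩ := Finset.nonempty_iff_ne_empty.2 hne
      rw [Finset.mem_inter] at hv
      have hvZ : v ∈ Z := by
        rw [hZ]; exact Finset.mem_biUnion.2 ⟨z, hz, hv.2⟩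
      have hsub : D a \ Z ⊆ D a \ {v} :=
        Finset.sdiff_subset_sdiff le_rfl (Finset.singleton_subset_iff.2 hvZ)
      calc (D a \ Z).card ≤ (D a \ {v}).card := Finset.card_le_card hsub
        _ = (D a).card - 1 := by
            rw [Finset.card_sdiff_of_subset (Finset.singleton_subset_iff.2 hv.1), Finset.card_singleton]
        _ ≤ k := by have := hwidth a; omega
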